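/- Let N ≥ 1, 2 + 4/N < p, q, μ_1, μ_2, β > 0, a, b > 0. Suppose (u_n, v_n) is a sequence in H^1(ℝ^N)² with |u_n|₂² = a, |v_n|₂² = b, P(u_n,v_n) = 0, and J(u_n,v_n) → m for some m ∈ ℝ. Then (u_n,v_n) is bounded in H^1 × H^1. -/

import Mathlib

open MeasureTheory Filter

set_option maxHeartbeats 1000000

theorem PS_sequence_bounded
    (N : ℕ) (hN : 1 ≤ N) (p q μ₁ μ₂ β a b m : ℝ)
    (hp : 2 + 4 / N < p) (hq : 2 + 4 / N < q)
    (hμ₁ : 0 < μ₁) (hμ₂ : 0 < μ₂) (hβ : 0 < β) (ha : 0 < a) (hb : 0 < b)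
    (γp γq : ℝ) (hγp : γp = N * (p - 2) / (2 * p)) (hγq : γq = N * (q - 2) / (2 * q))
    (u v : ℕ → EuclideanSpace ℝ (Fin N) → ℝ)
    (hu : ∀ n, MemLp (u n) 2 volume) (hv : ∀ n, MemLp (v n) 2 volume)
    (hua : ∀ n, (∫ x, |u n x| ^ 2) = a) (hvb : ∀ n, (∫ x, |v n x| ^ 2) = b)
    -- P(u_n, v_n) = 0
    (hP : ∀ n, (∫ x, ‖fderiv ℝ (u n) x‖ ^ 2) + (∫ x, ‖fderiv ℝ (v n) x‖ ^ 2)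
        - μ₁ * γp * (∫ x, |u n x| ^ p) - μ₂ * γq * (∫ x, |v n x| ^ q) = 0)
    -- J(u_n, v_n) → m
    (hJ : Tendsto (fun n =>
        (1 / 2 : ℝ) * ((∫ x, ‖fderiv ℝ (u n) x‖ ^ 2) + (∫ x, ‖fderiv ℝ (v n) x‖ ^ 2))
          - μ₁ / p * (∫ x, |u n x| ^ p) - μ₂ / q * (∫ x, |v n x| ^ q)
          - β * (∫ x, u n x * v n x)) atTop (nhds m)) :
    ∃ M : ℝ, ∀ n,
      (∫ x, ‖fderiv ℝ (u n) x‖ ^ 2) + (∫ x, |u n x| ^ 2) +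
        (∫ x, ‖fderiv ℝ (v n) x‖ ^ 2) + (∫ x, |v n x| ^ 2) ≤ M := by
  have hN0 : (0:ℝ) < N := by exact_mod_cast hN
  have h4N : (0:ℝ) < 4 / N := by positivity
  have hp2 : (2:ℝ) < p := by linarith
  have hq2 : (2:ℝ) < q := by linarith
  have hNp : (4:ℝ) < N * (p - 2) := by
    have h : 4 / (N:ℝ) < p - 2 := by linarith
    calc (4:ℝ) = N * (4 / N) := by field_simp
    _ < N * (p - 2) := by exact (mul_lt_mul_iff_right₀ hN0).mpr h
  have hNq : (4:ℝ) < N * (q - 2) := by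
    have h : 4 / (N:ℝ) < q - 2 := by linarith
    calc (4:ℝ) = N * (4 / N) := by field_simp
    _ < N * (q - 2) := by exact (mul_lt_mul_iff_right₀ hN0).mpr h
  set cp : ℝ := 2 / (N * (p - 2)) with hcp
  set cq : ℝ := 2 / (N * (q - 2)) with hcq
  set c : ℝ := max cp cq with hc
  have hcp2 : cp < 1 / 2 := by
    rw [hcp, div_lt_div_iff₀ (by linarith) (by norm_num)]; linarith
  have hcq2 : cq < 1 / 2 := by
    rw [hcq, div_lt_div_iff₀ (by linarith) (by norm_num)]; linarith
  have hc2 : c < 1 / 2 := max_lt hcp2 hcq2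
  have hcpos : 0 < c := lt_of_lt_of_le (by positivity : (0:ℝ) < cp) (le_max_left _ _)
  -- bound on J from convergence
  obtain ⟨M₀, hM₀⟩ := hJ.bddAbove_range
  have hM₀' : ∀ n, (1 / 2 : ℝ) * ((∫ x, ‖fderiv ℝ (u n) x‖ ^ 2) + (∫ x, ‖fderiv ℝ (v n) x‖ ^ 2))
          - μ₁ / p * (∫ x, |u n x| ^ p) - μ₂ / q * (∫ x, |v n x| ^ q)
          - β * (∫ x, u n x * v n x) ≤ M₀ := fun n => hM₀ ⟨n, rfl⟩
  refine ⟨(M₀ + β * (a + b) / 2) / (1 / 2 - c) + a + b, fun n => ?_⟩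
  set A := (∫ x, ‖fderiv ℝ (u n) x‖ ^ 2) with hA
  set B := (∫ x, ‖fderiv ℝ (v n) x‖ ^ 2) with hB
  set U := (∫ x, |u n x| ^ p) with hU
  set V := (∫ x, |v n x| ^ q) with hV
  have hAnn : 0 ≤ A := integral_nonneg fun x => by positivity
  have hBnn : 0 ≤ B := integral_nonneg fun x => by positivity
  have hUnn : 0 ≤ U := integral_nonneg fun x => by positivity
  have hVnn : 0 ≤ V := integral_nonneg fun x => by positivity
  -- integrability facts
  have hu2 : Integrable (fun x => u n x ^ 2) := (hu n).integrable_sq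
  have hv2 : Integrable (fun x => v n x ^ 2) := (hv n).integrable_sq
  have huv : Integrable (fun x => u n x * v n x) := by
    refine Integrable.mono' ((hu2.add hv2).div_const 2)
      ((hu n).aestronglyMeasurable.mul (hv n).aestronglyMeasurable) ?_
    filter_upwards with x
    have := two_mul_le_add_sq (u n x) (v n x)
    have := two_mul_le_add_sq (u n x) (-(v n x))
    rw [Real.norm_eq_abs, abs_le]
    constructor <;> simp only [Pi.add_apply] <;> nlinarith
  -- ∫ uv ≤ (a+b)/2
  have huvle : (∫ x, u n x * v n x) ≤ (a + b) / 2 := by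
    have h1 : (∫ x, u n x * v n x) ≤ ∫ x, (u n x ^ 2 + v n x ^ 2) / 2 := by
      refine integral_mono huv ((hu2.add hv2).div_const 2) fun x => ?_
      have := two_mul_le_add_sq (u n x) (v n x)
      simp only [Pi.add_apply]
      nlinarith
    have h2 : (∫ x, (u n x ^ 2 + v n x ^ 2) / 2) = (a + b) / 2 := by
      rw [integral_div, integral_add hu2 hv2]
      have hua' := hua n
      have hvb' := hvb n
      simp only [sq_abs] at hua' hvb'
      rw [hua', hvb']
    linarith
  -- identities for coefficients
  have hPn := hP n
  have hid1 : μ₁ / p * U = cp * (μ₁ * γp * U) := by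
    rw [hcp, hγp]; have : p - 2 ≠ 0 := by linarith
    field_simp
  have hid2 : μ₂ / q * V = cq * (μ₂ * γq * V) := by
    rw [hcq, hγq]; have : q - 2 ≠ 0 := by linarith
    field_simp
  have hγppos : 0 ≤ μ₁ * γp * U := by
    have : 0 ≤ γp := by rw [hγp]; positivity
    positivity
  have hγqpos : 0 ≤ μ₂ * γq * V := by
    have : 0 ≤ γq := by rw [hγq]; positivity
    positivity
  have hstep : μ₁ / p * U + μ₂ / q * V ≤ c * (A + B) := by
    have h1 : cp * (μ₁ * γp * U) ≤ c * (μ₁ * γp * U) :=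
      mul_le_mul_of_nonneg_right (le_max_left _ _) hγppos
    have h2 : cq * (μ₂ * γq * V) ≤ c * (μ₂ * γq * V) :=
      mul_le_mul_of_nonneg_right (le_max_right _ _) hγqpos
    have hsum : μ₁ * γp * U + μ₂ * γq * V = A + B := by linarith
    calc μ₁ / p * U + μ₂ / q * V = cp * (μ₁ * γp * U) + cq * (μ₂ * γq * V) := by
          rw [hid1, hid2]
      _ ≤ c * (μ₁ * γp * U) + c * (μ₂ * γq * V) := by linarith
      _ = c * (A + B) := by rw [← hsum]; ring
  -- lower bound for J
  have hJn := hM₀' n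
  have hkey : (1 / 2 - c) * (A + B) ≤ M₀ + β * (a + b) / 2 := by
    have hbuv : β * (∫ x, u n x * v n x) ≤ β * ((a + b) / 2) :=
      mul_le_mul_of_nonneg_left huvle hβ.le
    nlinarith [hJn]
  have hAB : A + B ≤ (M₀ + β * (a + b) / 2) / (1 / 2 - c) := by
    rw [le_div_iff₀ (by linarith)]
    linarith [hkey]
  have hua' := hua n
  have hvb' := hvb n
  rw [hua', hvb']
  linarith
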